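/- Let N ∈ ℕ, H ≤ (ℤ/Nℤ)^× a subgroup containing -1, and let s be a cusp of X_H(N) represented by a pair (c,d) with gcd(c,d,N)=1. Then the width of s equals N if and only if gcd(c,N) = 1. -/

import Mathlib

private lemma unit_one_cast (N : ℕ) (x : ℤ) (hx : (N : ℤ) ∣ x) :
    (((1 : (ZMod N)ˣ) : ZMod N)) = ((1 - x : ℤ) : ZMod N) := by
  have h0 : ((x : ℤ) : ZMod N) = 0 := (ZMod.intCast_zmod_eq_zero_iff_dvd x N).mpr hx
  push_cast
  rw [h0]
  ring

private lemma unit_one_cast' (N : ℕ) (x : ℤ) (hx : (N : ℤ) ∣ x) :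
    (((1 : (ZMod N)ˣ) : ZMod N)) = ((1 + x : ℤ) : ZMod N) := by
  have h0 : ((x : ℤ) : ZMod N) = 0 := (ZMod.intCast_zmod_eq_zero_iff_dvd x N).mpr hx
  push_cast
  rw [h0]
  ring

/-- the width of the cusp of `X_H(N)` represented by `(c,d)` equals `N`
if and only if `gcd(c, N) = 1`.  The width is the least `w > 0` such that
`[1-acw, a²w; -c²w, 1+acw] ∈ Γ_H(N)`, where `[a b; c d] ∈ SL₂(ℤ)`. -/
theorem stmt4 (N : ℕ) (hN : 0 < N) (H : Subgroup (ZMod N)ˣ) (hH : -1 ∈ H)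
    (a b c d : ℤ) (hdet : a * d - b * c = 1) :
    sInf {w : ℕ | 0 < w ∧ (N : ℤ) ∣ c ^ 2 * w ∧
        (∃ u ∈ H, ((u : (ZMod N)ˣ) : ZMod N) = ((1 - a * c * w : ℤ) : ZMod N)) ∧
        (∃ u ∈ H, ((u : (ZMod N)ˣ) : ZMod N) = ((1 + a * c * w : ℤ) : ZMod N))} = N
      ↔ Int.gcd c (N : ℤ) = 1 := by
  set S := {w : ℕ | 0 < w ∧ (N : ℤ) ∣ c ^ 2 * w ∧
      (∃ u ∈ H, ((u : (ZMod N)ˣ) : ZMod N) = ((1 - a * c * w : ℤ) : ZMod N)) ∧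
      (∃ u ∈ H, ((u : (ZMod N)ˣ) : ZMod N) = ((1 + a * c * w : ℤ) : ZMod N))} with hS
  constructor
  · intro hInf
    by_contra hg
    set g : ℕ := Int.gcd c (N : ℤ) with hgdef
    have hgc : (g : ℤ) ∣ c := Int.gcd_dvd_left c (N : ℤ)
    have hgN : g ∣ N := by
      have := Int.gcd_dvd_right (a := c) (b := (N : ℤ))
      exact_mod_cast this
    have hg0 : 0 < g := by
      rcases Nat.eq_zero_or_pos g with h | h
      · exfalso
        have := Nat.eq_zero_of_zero_dvd (h ▸ hgN)
        omega
      · exact h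
    have hg1 : 1 < g := by omega
    obtain ⟨c', hc'⟩ := hgc
    have hmul : ((N / g : ℕ) : ℤ) * g = N := by
      exact_mod_cast congrArg (Nat.cast : ℕ → ℤ) (Nat.div_mul_cancel hgN)
    have hdvd1 : (N : ℤ) ∣ a * c * ((N / g : ℕ) : ℤ) := by
      refine ⟨a * c', ?_⟩
      rw [hc']
      rw [← hmul]
      ring
    have hdvd2 : (N : ℤ) ∣ c ^ 2 * ((N / g : ℕ) : ℤ) := by
      refine ⟨c * c', ?_⟩
      rw [hc']
      rw [← hmul]
      ring
    have hmem : N / g ∈ S := by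
      refine ⟨Nat.div_pos (Nat.le_of_dvd hN hgN) hg0, hdvd2,
        ⟨1, H.one_mem, unit_one_cast N _ hdvd1⟩,
        ⟨1, H.one_mem, unit_one_cast' N _ hdvd1⟩⟩
    have hle : sInf S ≤ N / g := Nat.sInf_le hmem
    have hlt : N / g < N := Nat.div_lt_self hN hg1
    omega
  · intro hg
    have hNdvd : (N : ℤ) ∣ a * c * (N : ℤ) := ⟨a * c, by ring⟩
    have hNmem : N ∈ S := by
      refine ⟨hN, ⟨c ^ 2, by ring⟩,
        ⟨1, H.one_mem, unit_one_cast N _ hNdvd⟩,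
        ⟨1, H.one_mem, unit_one_cast' N _ hNdvd⟩⟩
    have hlow : ∀ w ∈ S, N ≤ w := by
      rintro w ⟨hw0, hw1, -, -⟩
      have hcop : IsCoprime c (N : ℤ) := Int.isCoprime_iff_gcd_eq_one.mpr hg
      have hcop2 : IsCoprime ((N : ℤ)) (c ^ 2) := (hcop.symm.pow_right)
      have : (N : ℤ) ∣ (w : ℤ) := hcop2.dvd_of_dvd_mul_left hw1
      have hNw : N ∣ w := by exact_mod_cast this
      exact Nat.le_of_dvd hw0 hNw
    have h1 : sInf S ≤ N := Nat.sInf_le hNmem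
    have h2 : N ≤ sInf S := hlow _ (Nat.sInf_mem ⟨N, hNmem⟩)
    omega
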